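/- Assume the primal-dual pair {(P),(D)} (with data c ∈ X*, b ∈ Y*) is consistent and the value v of the game G = (α,β,A) (for some α ∈ int C*, β ∈ int K*) equals 0. Then (D) is strictly feasible if and only if every x ∈ S with Ax ∈ K* satisfies ⟨c,x⟩ > 0, where S := {x ∈ C : ⟨α,x⟩ = 1}. -/

import Mathlib

set_option maxHeartbeats 1000000
set_option synthInstance.maxHeartbeats 400000

open Set Pointwise

/-- An interior point of the dual cone is strictly positive on nonzero cone elements. -/
lemma aux_dualcone_pos {X : Type*} [NormedAddCommGroup X] [NormedSpace ℝ X]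
    {C : Set X} {w : X →L[ℝ] ℝ}
    (hw : w ∈ interior {w : X →L[ℝ] ℝ | ∀ x ∈ C, 0 ≤ w x})
    {x : X} (hx : x ∈ C) (hx0 : x ≠ 0) : 0 < w x := by
  obtain ⟨ε, εpos, hball⟩ := Metric.mem_nhds_iff.1 (mem_interior_iff_mem_nhds.1 hw)
  obtain ⟨g, hg1, hgx⟩ := exists_dual_vector ℝ x (norm_ne_zero_iff.2 hx0)
  have hgx' : g x = ‖x‖ := by exact_mod_cast hgx
  have hmem : w - (ε/2) • g ∈ Metric.ball w ε := by
    rw [Metric.mem_ball, dist_eq_norm, sub_sub_cancel_left, norm_neg, norm_smul (ε/2) g, hg1]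
    rw [Real.norm_eq_abs, abs_of_pos (by linarith : (0:ℝ) < ε/2)]
    linarith
  have h0 := hball hmem x hx
  simp only [ContinuousLinearMap.sub_apply, ContinuousLinearMap.smul_apply, smul_eq_mul,
    hgx'] at h0
  have hnx : 0 < ‖x‖ := norm_pos_iff.2 hx0
  nlinarith

/-- Bipolar-type lemma: membership in a closed convex cone via dual functionals. -/
lemma aux_mem_of_dual {X : Type*} [NormedAddCommGroup X] [NormedSpace ℝ X]
    {C : Set X} (hCconv : Convex ℝ C) (hCclosed : IsClosed C)
    (hCcone : ∀ (r : ℝ), 0 ≤ r → ∀ x ∈ C, r • x ∈ C) (h0 : (0:X) ∈ C)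
    {x : X} (h : ∀ f : X →L[ℝ] ℝ, (∀ z ∈ C, 0 ≤ f z) → 0 ≤ f x) : x ∈ C := by
  by_contra hx
  obtain ⟨f, u, hfC, hfx⟩ := geometric_hahn_banach_closed_point hCconv hCclosed hx
  have hu : 0 < u := by simpa using hfC 0 h0
  have hfz : ∀ z ∈ C, f z ≤ 0 := by
    intro z hz
    by_contra h'
    push_neg at h'
    have ht : (0:ℝ) ≤ u / f z + 1 := by positivity
    have := hfC ((u / f z + 1) • z) (hCcone _ ht z hz)
    rw [map_smul] at this
    simp only [smul_eq_mul] at this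
    have key : (u / f z + 1) * f z = u + f z := by field_simp
    rw [key] at this
    linarith
  have h2 := h (-f) (fun z hz => by simpa using hfz z hz)
  simp only [ContinuousLinearMap.neg_apply] at h2
  linarith


/-- Lemma 4.3, relation (4.5): if {(P),(D)} is consistent and the game
G = (α,β,A) has value v = 0, then (D) is strictly feasible iff every x ∈ S with
Ax ∈ K* satisfies ⟨c,x⟩ > 0. -/
theorem stmt13
    {X Y : Type*} [NormedAddCommGroup X] [NormedSpace ℝ X] [CompleteSpace X]
    [NormedAddCommGroup Y] [NormedSpace ℝ Y] [CompleteSpace Y]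
    -- reflexivity of X and Y
    (hXrefl : Function.Surjective (NormedSpace.inclusionInDoubleDual ℝ X))
    (hYrefl : Function.Surjective (NormedSpace.inclusionInDoubleDual ℝ Y))
    (A : X →L[ℝ] (Y →L[ℝ] ℝ))
    -- closed convex cones C, K with solid dual cones
    (C : Set X) (K : Set Y)
    (hCcone : ∀ (r : ℝ), 0 ≤ r → ∀ x ∈ C, r • x ∈ C) (hCconv : Convex ℝ C)
    (hCclosed : IsClosed C)
    (hKcone : ∀ (r : ℝ), 0 ≤ r → ∀ y ∈ K, r • y ∈ K) (hKconv : Convex ℝ K)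
    (hKclosed : IsClosed K)
    (Cstar : Set (X →L[ℝ] ℝ)) (hCstar : Cstar = {w : X →L[ℝ] ℝ | ∀ x ∈ C, 0 ≤ w x})
    (Kstar : Set (Y →L[ℝ] ℝ)) (hKstar : Kstar = {z : Y →L[ℝ] ℝ | ∀ y ∈ K, 0 ≤ z y})
    -- data of the programs and consistency
    (c : X →L[ℝ] ℝ) (b : Y →L[ℝ] ℝ)
    (FeasP : Set X) (hFeasP : FeasP = {x | x ∈ C ∧ A x - b ∈ Kstar})
    (FeasD : Set Y) (hFeasD : FeasD = {y | y ∈ K ∧ -(A.flip y) + c ∈ Cstar})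
    (hPne : FeasP.Nonempty) (hDne : FeasD.Nonempty)
    -- the game G = (α,β,A) with α ∈ int C*, β ∈ int K*
    (α : X →L[ℝ] ℝ) (hα : α ∈ interior Cstar)
    (β : Y →L[ℝ] ℝ) (hβ : β ∈ interior Kstar)
    (S : Set X) (hS : S = {x ∈ C | α x = 1})
    (T : Set Y) (hT : T = {y ∈ K | β y = 1})
    -- finite security levels (F3)
    (hSne : S.Nonempty) (hTne : T.Nonempty)
    (hbb : ∀ x ∈ S, BddBelow ((fun y => A x y) '' T))
    (hba : BddAbove ((fun x => sInf ((fun y => A x y) '' T)) '' S))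
    (hba' : ∀ y ∈ T, BddAbove ((fun x => A x y) '' S))
    (hbb' : BddBelow ((fun y => sSup ((fun x => A x y) '' S)) '' T))
    -- v is the value of the game
    (v : ℝ)
    (hv : v = sSup ((fun x => sInf ((fun y => A x y) '' T)) '' S))
    (hv' : v = sInf ((fun y => sSup ((fun x => A x y) '' S)) '' T))
    -- hypothesis: the game value is 0
    (hv0 : v = 0) :
    ((∃ y ∈ K, -(A.flip y) + c ∈ interior Cstar) ↔
      (∀ x ∈ S, A x ∈ Kstar → 0 < c x)) := by
  clear hv hv' hv0 hbb hba hba' hbb' hβ hFeasP hFeasD hPne hDne hYrefl b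
  have h0C : (0:X) ∈ C := by
    obtain ⟨x, hx⟩ := hSne
    rw [hS] at hx
    simpa using hCcone 0 le_rfl x hx.1
  have h0K : (0:Y) ∈ K := by
    obtain ⟨y, hy⟩ := hTne
    rw [hT] at hy
    simpa using hKcone 0 le_rfl y hy.1
  constructor
  · rintro ⟨y, hyK, hyint⟩ x hxS hAx
    rw [hS] at hxS
    obtain ⟨hxC, hαx⟩ := hxS
    have hx0 : x ≠ 0 := by
      intro h
      rw [h] at hαx
      simp at hαx
    have h1 : 0 < (-(A.flip y) + c) x := aux_dualcone_pos (hCstar ▸ hyint) hxC hx0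
    have h2 : 0 ≤ A x y := by
      rw [hKstar] at hAx
      exact hAx y hyK
    simp only [ContinuousLinearMap.add_apply, ContinuousLinearMap.neg_apply,
      ContinuousLinearMap.flip_apply] at h1
    linarith
  · intro hpos
    by_contra hnsf
    push_neg at hnsf
    have hCstarConv : Convex ℝ Cstar := by
      rw [hCstar]
      intro w1 h1 w2 h2 a b ha hb hab
      intro x hx
      simp only [ContinuousLinearMap.add_apply, ContinuousLinearMap.coe_smul',
        Pi.smul_apply, smul_eq_mul]
      have := h1 x hx
      have := h2 x hx
      positivity
    have hCstarCone : ∀ (t : ℝ), 0 ≤ t → ∀ w ∈ Cstar, t • w ∈ Cstar := by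
      rw [hCstar]
      intro t ht w hw x hx
      simp only [ContinuousLinearMap.coe_smul', Pi.smul_apply, smul_eq_mul]
      exact mul_nonneg ht (hw x hx)
    have h0Cstar : (0 : X →L[ℝ] ℝ) ∈ Cstar := by
      rw [hCstar]; intro x _; simp
    set Q : Set (X →L[ℝ] ℝ) := (⇑A.flip) '' K + interior Cstar with hQ
    have hQconv : Convex ℝ Q := by
      apply Convex.add _ hCstarConv.interior
      intro w1 hw1 w2 hw2 a b ha hb hab
      obtain ⟨y1, hy1, rfl⟩ := hw1
      obtain ⟨y2, hy2, rfl⟩ := hw2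
      exact ⟨a • y1 + b • y2, hKconv hy1 hy2 ha hb hab, by simp [map_add, map_smul]⟩
    have hQopen : IsOpen Q := isOpen_interior.add_left
    have hcQ : c ∉ Q := by
      rintro ⟨w1, ⟨y, hyK, rfl⟩, w2, hw2, hsum⟩
      refine hnsf y hyK ?_
      have : -(A.flip y) + c = w2 := by
        rw [← hsum]
        show -(A.flip y) + (A.flip y + w2) = w2
        exact neg_add_cancel_left _ _
      rw [this]
      exact hw2
    obtain ⟨Φ, hΦ⟩ := geometric_hahn_banach_open_point hQconv hQopen hcQ
    obtain ⟨x0, hx0⟩ := hXrefl Φ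
    have hev : ∀ w : X →L[ℝ] ℝ, Φ w = w x0 := by
      intro w
      rw [← hx0]
      rfl
    have key : ∀ y ∈ K, ∀ w ∈ interior Cstar, A x0 y + w x0 < c x0 := by
      intro y hy w hw
      have := hΦ (A.flip y + w) (Set.add_mem_add ⟨y, hy, rfl⟩ hw)
      rw [hev, hev] at this
      simpa using this
    have hαint : α ∈ interior Cstar := hα
    have hbase : α x0 < c x0 := by
      have := key 0 h0K α hαint
      simpa using this
    have step1 : ∀ y ∈ K, A x0 y ≤ 0 := by
      intro y hy
      by_contra h'
      push_neg at h'
      set t : ℝ := (c x0 - α x0) / (A x0 y) with ht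
      have htpos : 0 < t := div_pos (by linarith) h'
      have := key (t • y) (hKcone t htpos.le y hy) α hαint
      rw [map_smul] at this
      simp only [ContinuousLinearMap.smul_apply, smul_eq_mul] at this
      rw [ht, div_mul_cancel₀ _ (ne_of_gt h')] at this
      linarith
    have step2 : ∀ w ∈ Cstar, w x0 ≤ 0 := by
      intro w hw
      by_contra h'
      push_neg at h'
      have h0' : (1/2 : ℝ) * α x0 < c x0 := by
        have hmem0 : (1/2 : ℝ) • α + (1/2 : ℝ) • ((0:ℝ) • w) ∈ interior Cstar :=
          hCstarConv.combo_interior_self_mem_interior hαint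
            (hCstarCone 0 le_rfl w hw) (by norm_num) (by norm_num) (by norm_num)
        have := key 0 h0K _ hmem0
        simp only [map_zero, ContinuousLinearMap.zero_apply, zero_add, zero_smul,
          smul_zero, add_zero, ContinuousLinearMap.add_apply,
          ContinuousLinearMap.coe_smul', Pi.smul_apply, smul_eq_mul] at this
        linarith
      set t : ℝ := (2 * c x0 - α x0) / (w x0) with ht
      have htpos : 0 < t := div_pos (by linarith) h'
      have hmem : (1/2 : ℝ) • α + (1/2 : ℝ) • (t • w) ∈ interior Cstar :=
        hCstarConv.combo_interior_self_mem_interior hαint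
          (hCstarCone t htpos.le w hw) (by norm_num) (by norm_num) (by norm_num)
      have := key 0 h0K _ hmem
      simp only [map_zero, ContinuousLinearMap.zero_apply, zero_add,
        ContinuousLinearMap.add_apply, ContinuousLinearMap.coe_smul', Pi.smul_apply,
        smul_eq_mul] at this
      rw [ht] at this
      rw [div_mul_cancel₀ _ (ne_of_gt h')] at this
      linarith
    have hαx0 : α x0 ≤ 0 := step2 α (interior_subset hαint)
    have step3 : 0 ≤ c x0 := by
      by_contra h'
      push_neg at h'
      rcases lt_or_eq_of_le hαx0 with hneg | hzero
      · set s : ℝ := min 1 (c x0 / (2 * α x0)) with hs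
        have hspos : 0 < s := lt_min one_pos (div_pos_of_neg_of_neg h' (by linarith))
        have hs1 : s ≤ 1 := min_le_left _ _
        have hmem : s • α + (1 - s) • (0 : X →L[ℝ] ℝ) ∈ interior Cstar :=
          hCstarConv.combo_interior_self_mem_interior hαint h0Cstar hspos
            (by linarith) (by ring)
        have hkey := key 0 h0K _ hmem
        simp only [map_zero, ContinuousLinearMap.zero_apply, zero_add,
          ContinuousLinearMap.add_apply, ContinuousLinearMap.coe_smul', Pi.smul_apply,
          smul_eq_mul, smul_zero, add_zero] at hkey
        have hsle : s ≤ c x0 / (2 * α x0) := min_le_right _ _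
        have hq : (c x0 / (2 * α x0)) * (2 * α x0) = c x0 :=
          div_mul_cancel₀ _ (by linarith)
        nlinarith [mul_le_mul_of_nonpos_right hsle hneg.le]
      · have := key 0 h0K α hαint
        simp only [map_zero, ContinuousLinearMap.zero_apply, zero_add] at this
        linarith
    have hx0ne : x0 ≠ 0 := by
      intro h
      rw [h] at hbase
      simp at hbase
    have hx1C : -x0 ∈ C := by
      apply aux_mem_of_dual hCconv hCclosed hCcone h0C
      intro f hf
      have : f x0 ≤ 0 := step2 f (by rw [hCstar]; exact hf)
      simp only [map_neg]
      linarith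
    have hx1ne : -x0 ≠ 0 := by simpa using hx0ne
    have hαx1 : 0 < α (-x0) := aux_dualcone_pos (hCstar ▸ hαint) hx1C hx1ne
    set r : ℝ := (α (-x0))⁻¹ with hr
    have hrpos : 0 < r := inv_pos.2 hαx1
    set x2 : X := r • (-x0) with hx2
    have hx2S : x2 ∈ S := by
      rw [hS]
      refine ⟨hCcone r hrpos.le _ hx1C, ?_⟩
      rw [hx2, map_smul]
      simp only [smul_eq_mul]
      exact inv_mul_cancel₀ hαx1.ne'
    have hAx2 : A x2 ∈ Kstar := by
      rw [hKstar]
      intro y hy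
      rw [hx2, map_smul]
      simp only [ContinuousLinearMap.smul_apply, map_neg, ContinuousLinearMap.neg_apply,
        smul_eq_mul]
      have := step1 y hy
      nlinarith
    have hcx2 : c x2 ≤ 0 := by
      rw [hx2, map_smul]
      simp only [smul_eq_mul, map_neg]
      nlinarith
    have := hpos x2 hx2S hAx2
    linarith
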